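/- For n ≥ 2 define on ℝⁿ the characteristic speeds λ_i(u) = (Σ_{r=1}^{n} u_r) + 2u_i and the metric coefficients g_i(u) = Π_{r≠i} (u_r − u_i). Then for all i ≠ j in {1,…,n} and all u ∈ ℝⁿ: (a) ∂λ_i/∂u_j = 1 and λ_j(u) − λ_i(u) = 2(u_j − u_i); and (b) (u_j − u_i) · (∂g_i/∂u_j)(u) = g_i(u). Consequently, at every point with pairwise distinct coordinates, ∂_j log√(g_i) = (∂_j λ_i)/(λ_j − λ_i), i.e. the dispersionless coupled KdV system u^i_T = λ_i(u) u^i_X is semi-Hamiltonian with diagonal metric g_ii = g_i. -/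

import Mathlib

/-- The characteristic speeds `λ_i(u) = (Σ_r u_r) + 2 u_i` of the dispersionless coupled KdV
system. -/
noncomputable def cKdVSpeed {n : ℕ} (i : Fin n) (u : Fin n → ℝ) : ℝ :=
  (∑ r, u r) + 2 * u i

/-- The diagonal metric coefficients `g_i(u) = Π_{r ≠ i} (u_r − u_i)` for the dispersionless
coupled KdV system. -/
noncomputable def cKdVMetric {n : ℕ} (i : Fin n) (u : Fin n → ℝ) : ℝ :=
  ∏ r ∈ Finset.univ.erase i, (u r - u i)

section aux

variable {n : ℕ}

/-- The `r`-th coordinate projection as a continuous linear map. -/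
noncomputable def prj (n : ℕ) (r : Fin n) : (Fin n → ℝ) →L[ℝ] ℝ :=
  ContinuousLinearMap.proj r

@[simp] lemma prj_apply (r : Fin n) (v : Fin n → ℝ) : prj n r v = v r := rfl

/-- Derivative of the speed. -/
lemma cKdVSpeed_hasFDerivAt (i : Fin n) (u : Fin n → ℝ) :
    HasFDerivAt (cKdVSpeed i)
      ((∑ r, prj n r) + (2 : ℝ) • prj n i) u := by
  have h1 : HasFDerivAt (fun v : Fin n → ℝ => ∑ r, v r)
      (∑ r, prj n r) u := by
    apply HasFDerivAt.fun_sum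
    intro r _
    exact (prj n r).hasFDerivAt
  have h2 : HasFDerivAt (fun v : Fin n → ℝ => 2 * v i)
      ((2 : ℝ) • prj n i) u := by
    simpa [Pi.smul_def, smul_eq_mul] using ((prj n i).hasFDerivAt (x := u)).const_smul (2 : ℝ)
  exact h1.add h2

lemma fderiv_speed (i j : Fin n) (hij : i ≠ j) (u : Fin n → ℝ) :
    fderiv ℝ (cKdVSpeed i) u (Pi.single j 1) = 1 := by
  rw [(cKdVSpeed_hasFDerivAt i u).fderiv]
  simp [Pi.single_apply, hij.symm, Finset.sum_ite_eq']

lemma cKdVMetric_hasFDerivAt (i : Fin n) (u : Fin n → ℝ) :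
    HasFDerivAt (cKdVMetric i)
      (∑ r ∈ Finset.univ.erase i, (∏ s ∈ (Finset.univ.erase i).erase r, (u s - u i)) •
        (prj n r - prj n i)) u := by
  exact HasFDerivAt.finset_prod (u := Finset.univ.erase i)
    (g := fun r (v : Fin n → ℝ) => v r - v i)
    (g' := fun r => prj n r - prj n i) (x := u)
    (fun r _ => ((prj n r).hasFDerivAt).sub ((prj n i).hasFDerivAt))

lemma fderiv_metric (i j : Fin n) (hij : i ≠ j) (u : Fin n → ℝ) :
    fderiv ℝ (cKdVMetric i) u (Pi.single j 1)
      = ∏ s ∈ (Finset.univ.erase i).erase j, (u s - u i) := by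
  rw [(cKdVMetric_hasFDerivAt i u).fderiv]
  have hd : ∀ r : Fin n,
      (prj n r - prj n i) (Pi.single j 1)
      = if r = j then 1 else 0 := by
    intro r
    simp [Pi.single_apply, hij.symm]
  simp only [ContinuousLinearMap.coe_sum', Finset.sum_apply,
    ContinuousLinearMap.coe_smul', Pi.smul_apply, hd, smul_eq_mul, mul_ite, mul_one, mul_zero]
  rw [Finset.sum_ite_eq' (Finset.univ.erase i) j]
  simp [hij.symm]

end aux

/-- For `n ≥ 2`, `λ_i(u) = (Σ_r u_r) + 2u_i` and
`g_i(u) = Π_{r ≠ i}(u_r − u_i)`, for all `i ≠ j` and all `u`: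
(a) `∂λ_i/∂u_j = 1` and `λ_j(u) − λ_i(u) = 2(u_j − u_i)`;
(b) `(u_j − u_i) · ∂g_i/∂u_j (u) = g_i(u)`.
Consequently, at every point with pairwise distinct coordinates,
`∂_j log √(g_i) = (∂_j λ_i)/(λ_j − λ_i)` (the square root taken of `|g_i|`, as `g_i` is only
nonzero, not necessarily positive, there); i.e. the dispersionless coupled KdV system
`u^i_T = λ_i(u) u^i_X` is semi-Hamiltonian with diagonal metric `g_ii = g_i`. -/
theorem coupled_kdv_semi_hamiltonian
    {n : ℕ} (hn : 2 ≤ n) :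
    ∀ i j : Fin n, i ≠ j → ∀ u : Fin n → ℝ,
      (fderiv ℝ (cKdVSpeed i) u (Pi.single j 1) = 1 ∧
        cKdVSpeed j u - cKdVSpeed i u = 2 * (u j - u i)) ∧
      ((u j - u i) * fderiv ℝ (cKdVMetric i) u (Pi.single j 1) = cKdVMetric i u) ∧
      ((∀ r s : Fin n, r ≠ s → u r ≠ u s) →
        fderiv ℝ (fun x => Real.log (Real.sqrt |cKdVMetric i x|)) u (Pi.single j 1)
          = fderiv ℝ (cKdVSpeed i) u (Pi.single j 1)
              / (cKdVSpeed j u - cKdVSpeed i u)) := by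
  intro i j hij u
  have hjmem : j ∈ Finset.univ.erase i := Finset.mem_erase.2 ⟨hij.symm, Finset.mem_univ j⟩
  have hb : (u j - u i) * fderiv ℝ (cKdVMetric i) u (Pi.single j 1) = cKdVMetric i u := by
    rw [fderiv_metric i j hij u, cKdVMetric]
    exact Finset.mul_prod_erase (Finset.univ.erase i) (fun r => u r - u i) hjmem
  refine ⟨⟨fderiv_speed i j hij u, by simp [cKdVSpeed]; ring⟩, hb, ?_⟩
  intro hdist
  have hne : ∀ r ∈ Finset.univ.erase i, u r - u i ≠ 0 := fun r hr =>
    sub_ne_zero.2 (hdist r i (Finset.mem_erase.1 hr).1)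
  have hg : cKdVMetric i u ≠ 0 := Finset.prod_ne_zero_iff.2 hne
  have hji : u j - u i ≠ 0 := hne j hjmem
  -- rewrite log sqrt abs as log/2
  have hfun : (fun x : Fin n → ℝ => Real.log (Real.sqrt |cKdVMetric i x|))
      = fun x => (1/2 : ℝ) * Real.log (cKdVMetric i x) := by
    funext x
    rw [Real.log_sqrt (abs_nonneg _), Real.log_abs]
    ring
  rw [hfun]
  set G := (∑ r ∈ Finset.univ.erase i, (∏ s ∈ (Finset.univ.erase i).erase r, (u s - u i)) •
      (prj n r - prj n i)) with hG
  have hlog : HasFDerivAt (fun x => (1/2 : ℝ) * Real.log (cKdVMetric i x))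
      ((1/2 : ℝ) • ((cKdVMetric i u)⁻¹ • G)) u :=
    (((cKdVMetric_hasFDerivAt i u).log hg).const_smul (1/2 : ℝ))
  rw [hlog.fderiv]
  have hGval : G (Pi.single j 1) = fderiv ℝ (cKdVMetric i) u (Pi.single j 1) := by
    rw [(cKdVMetric_hasFDerivAt i u).fderiv]
  have hGv : G (Pi.single j 1) = cKdVMetric i u / (u j - u i) := by
    rw [hGval, eq_div_iff hji, mul_comm]
    exact hb
  simp only [ContinuousLinearMap.coe_smul', Pi.smul_apply, smul_eq_mul, hGv,
    fderiv_speed i j hij u]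
  have hs : cKdVSpeed j u - cKdVSpeed i u = 2 * (u j - u i) := by simp [cKdVSpeed]; ring
  rw [hs]
  field_simp
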